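/- For q > 1 real and N real with |N-(q+1)| ≤ 2√q, the polynomial P(T) = 1 + (N-2)T + q²T² satisfies: both complex roots have absolute value 1/q. -/

import Mathlib

/-- RH for the SL₂ zeta: both complex roots of `1 + (N-2)T + q²T²` have absolute
value `1/q` under the Hasse bound. -/
theorem stmt_11 (q N : ℝ) (hq : 1 < q) (hN : |N - (q + 1)| ≤ 2 * Real.sqrt q) :
    ∀ z : ℂ, 1 + ((N : ℂ) - 2) * z + (q : ℂ) ^ 2 * z ^ 2 = 0 →
      ‖z‖ = 1 / q := by
  intro z hz
  have hq0 : (0:ℝ) < q := lt_trans one_pos hq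
  have hs2 : Real.sqrt q ^ 2 = q := Real.sq_sqrt hq0.le
  have hs1 : 1 ≤ Real.sqrt q := by nlinarith [Real.sqrt_nonneg q]
  have hNa := abs_le.mp hN
  have key : (N - 2) ^ 2 ≤ 4 * q ^ 2 := by
    nlinarith [hNa.1, hNa.2, sq_nonneg (Real.sqrt q - 1)]
  rw [Complex.ext_iff] at hz
  simp only [Complex.add_re, Complex.add_im, Complex.mul_re, Complex.mul_im, Complex.one_re,
    Complex.one_im, Complex.sub_re, Complex.sub_im, Complex.ofReal_re, Complex.ofReal_im,
    Complex.zero_re, Complex.zero_im, pow_two, Complex.re_ofNat, Complex.im_ofNat] at hz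
  obtain ⟨hre, him⟩ := hz
  have hkey : z.re ^ 2 + z.im ^ 2 = 1 / q ^ 2 := by
    rcases eq_or_ne z.im 0 with hy0 | hy0
    · have hE : q ^ 2 * z.re ^ 2 + (N - 2) * z.re + 1 = 0 := by
        linear_combination hre + q ^ 2 * z.im * hy0
      have hx2 : q ^ 2 * z.re ^ 2 = 1 := by
        nlinarith [sq_nonneg (2 * q ^ 2 * z.re + (N - 2)), key, hE]
      rw [hy0]
      field_simp
      linear_combination hx2
    · have him' : (N - 2) + 2 * q ^ 2 * z.re = 0 := by
        have h : z.im * ((N - 2) + 2 * q ^ 2 * z.re) = 0 := by linear_combination him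
        rcases mul_eq_zero.mp h with h | h
        · exact absurd h hy0
        · exact h
      have hg : q ^ 2 * (z.re ^ 2 + z.im ^ 2) = 1 := by
        linear_combination z.re * him' - hre
      field_simp
      linear_combination hg
  rw [Complex.norm_def, Complex.normSq_apply]
  rw [show z.re * z.re + z.im * z.im = (1/q)^2 by rw [div_pow, one_pow]; linear_combination hkey]
  exact Real.sqrt_sq (by positivity)
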